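/- Let st ⊆ ℝ^N be compact, let gd ⊆ st be a closed subset, set fs := st \ gd, and let F : ℝ^N → ℝ^N be a globally Lipschitz vector field such that there exists a continuous local semiflow φ on fs whose trajectories t ↦ φ(t,x) are differentiable with derivative F(φ(t,x)) (in particular trajectories of F starting in fs remain in fs as long as they are defined under φ). Let α : st → [0,∞) be Lipschitz with α⁻¹(0) = gd. Then there exists a unique continuous semiflow Φ_α : [0,∞) × st → st such that for every x ∈ st the curve t ↦ Φ_α(t,x) is differentiable with ∂Φ_α/∂t(t,x) = α(Φ_α(t,x)) · F(Φ_α(t,x)); in particular st is positively invariant under the flow of the vector field α·F (extended Lipschitz-continuously to ℝ^N). -/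

import Mathlib

open Set
open scoped NNReal

noncomputable section
namespace RescaledAux

variable {E : Type*} [NormedAddCommGroup E] [NormedSpace ℝ E] [CompleteSpace E]

lemma icc_to_ici {f : ℝ → E} {f' : E} {a b t : ℝ}
    (h : HasDerivWithinAt f f' (Icc a b) t) (ht : t ∈ Ico a b) (hat : a ≤ t) :
    HasDerivWithinAt f f' (Ici t) t :=
  h.mono_of_mem_nhdsWithin (Filter.mem_of_superset
    (Icc_mem_nhdsGE ht.2) (Icc_subset_Icc hat le_rfl))

lemma unique_on_Icc {G : E → E} {KG : ℝ≥0} (hG : LipschitzWith KG G) {b : ℝ} {f g : ℝ → E}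
    (hfc : ContinuousOn f (Icc 0 b))
    (hf : ∀ t ∈ Ico (0:ℝ) b, HasDerivWithinAt f (G (f t)) (Ici t) t)
    (hgc : ContinuousOn g (Icc 0 b))
    (hg : ∀ t ∈ Ico (0:ℝ) b, HasDerivWithinAt g (G (g t)) (Ici t) t)
    (h0 : f 0 = g 0) : EqOn f g (Icc 0 b) :=
  ODE_solution_unique_of_mem_Icc_right (v := fun _ => G) (s := fun _ => univ)
    (fun _ _ => hG.lipschitzOnWith) hfc hf (fun _ _ => trivial) hgc hg
    (fun _ _ => trivial) h0

lemma cont_of_ici_deriv {G : E → E} {f : ℝ → E}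
    (hf : ∀ t : ℝ, 0 ≤ t → HasDerivWithinAt f (G (f t)) (Ici 0) t) (b : ℝ) :
    ContinuousOn f (Icc 0 b) := fun t ht =>
  ((hf t ht.1).continuousWithinAt).mono (Icc_subset_Ici_self)

lemma ico_deriv_of_ici_deriv {G : E → E} {f : ℝ → E}
    (hf : ∀ t : ℝ, 0 ≤ t → HasDerivWithinAt f (G (f t)) (Ici 0) t) (b : ℝ) :
    ∀ t ∈ Ico (0:ℝ) b, HasDerivWithinAt f (G (f t)) (Ici t) t := fun t ht =>
  (hf t ht.1).mono (Ici_subset_Ici.2 ht.1)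

lemma flow_unique {G : E → E} {KG : ℝ≥0} (hG : LipschitzWith KG G) {f g : ℝ → E}
    (hf : ∀ t : ℝ, 0 ≤ t → HasDerivWithinAt f (G (f t)) (Ici 0) t)
    (hg : ∀ t : ℝ, 0 ≤ t → HasDerivWithinAt g (G (g t)) (Ici 0) t)
    (h0 : f 0 = g 0) : ∀ t : ℝ, 0 ≤ t → f t = g t := fun t ht =>
  unique_on_Icc hG (cont_of_ici_deriv hf t) (ico_deriv_of_ici_deriv hf t)
    (cont_of_ici_deriv hg t) (ico_deriv_of_ici_deriv hg t) h0 ⟨ht, le_rfl⟩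

theorem exists_global_flow {G : E → E} {KG : ℝ≥0} (hG : LipschitzWith KG G)
    {MG : ℝ} (hMG : ∀ x, ‖G x‖ ≤ MG) :
    ∃ Φ : ℝ → E → E,
      (∀ x, Φ 0 x = x) ∧
      (∀ x (t : ℝ), 0 ≤ t →
        HasDerivWithinAt (fun τ : ℝ => Φ τ x) (G (Φ t x)) (Ici 0) t) ∧
      (∀ x y (t : ℝ), 0 ≤ t → dist (Φ t x) (Φ t y) ≤ dist x y * Real.exp (KG * t)) ∧
      (∀ x (s t : ℝ), 0 ≤ s → s ≤ t → dist (Φ t x) (Φ s x) ≤ MG * (t - s)) := by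
  have hMG0 : 0 ≤ MG := le_trans (norm_nonneg _) (hMG 0)
  -- local-in-time solutions on `[0, n]` for every `n : ℕ`
  have hex : ∀ (x₀ : E) (n : ℕ), ∃ f : ℝ → E, f 0 = x₀ ∧
      ∀ t ∈ Icc (0:ℝ) n, HasDerivWithinAt f (G (f t)) (Icc (0:ℝ) n) t := by
    intro x₀ n
    have hpl : IsPicardLindelof (fun _ : ℝ => G) (tmin := 0) (tmax := (n:ℝ))
        ⟨0, le_rfl, n.cast_nonneg⟩ x₀ (MG * n).toNNReal 0 MG.toNNReal KG := by
      apply IsPicardLindelof.of_time_independent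
      · intro x _; rw [Real.coe_toNNReal _ hMG0]; exact hMG x
      · exact hG.lipschitzOnWith
      · simp only [sub_zero, NNReal.coe_zero, Real.coe_toNNReal _ hMG0,
          Real.coe_toNNReal _ (mul_nonneg hMG0 n.cast_nonneg)]
        rw [max_eq_left n.cast_nonneg]
    obtain ⟨f, hf0, hfd⟩ := hpl.exists_eq_forall_mem_Icc_hasDerivWithinAt₀
    exact ⟨f, hf0, hfd⟩
  choose sol hsol0 hsold using hex
  -- convert the `Icc` derivative into an `Ici t` one
  have key : ∀ (x : E) (n : ℕ), ∀ t ∈ Ico (0:ℝ) n,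
      HasDerivWithinAt (sol x n) (G (sol x n t)) (Ici t) t := fun x n t ht =>
    icc_to_ici (hsold x n t ⟨ht.1, le_of_lt ht.2⟩) ht ht.1
  have cont : ∀ (x : E) (n : ℕ), ContinuousOn (sol x n) (Icc (0:ℝ) n) :=
    fun x n t ht => (hsold x n t ht).continuousWithinAt
  -- solutions for different horizons agree
  have agree : ∀ (x : E) (m n : ℕ) (t : ℝ), 0 ≤ t → t ≤ m → t ≤ n →
      sol x m t = sol x n t := by
    intro x m n t ht0 htm htn
    have hmn : (min (m:ℝ) n : ℝ) = min (m:ℝ) (n:ℝ) := rfl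
    have h := unique_on_Icc (b := min (m:ℝ) n) hG
      ((cont x m).mono (Icc_subset_Icc le_rfl (min_le_left _ _)))
      (fun τ hτ => key x m τ ⟨hτ.1, lt_of_lt_of_le hτ.2 (min_le_left _ _)⟩)
      ((cont x n).mono (Icc_subset_Icc le_rfl (min_le_right _ _)))
      (fun τ hτ => key x n τ ⟨hτ.1, lt_of_lt_of_le hτ.2 (min_le_right _ _)⟩)
      (by rw [hsol0, hsol0])
    exact h ⟨ht0, le_min htm htn⟩
  -- the global flow
  set Φ : ℝ → E → E := fun t x => sol x (⌈t⌉₊ + 1) t with hΦdef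
  have hceil : ∀ t : ℝ, 0 ≤ t → t < ((⌈t⌉₊ + 1 : ℕ) : ℝ) := by
    intro t ht
    push_cast
    linarith [Nat.le_ceil t]
  have hΦeq : ∀ (x : E) (n : ℕ) (t : ℝ), 0 ≤ t → t ≤ n → Φ t x = sol x n t := by
    intro x n t ht0 htn
    exact agree x (⌈t⌉₊ + 1) n t ht0 (le_of_lt (hceil t ht0)) htn
  have hΦ0 : ∀ x : E, Φ 0 x = x := by
    intro x; rw [hΦdef]; simp only; rw [hsol0]
  have hΦd : ∀ (x : E) (t : ℝ), 0 ≤ t →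
      HasDerivWithinAt (fun τ : ℝ => Φ τ x) (G (Φ t x)) (Ici 0) t := by
    intro x t ht
    set n : ℕ := ⌈t⌉₊ + 1 with hn
    have htn : t < (n:ℝ) := hceil t ht
    -- derivative of `sol x n` within `Ici 0`
    have hIccmem : Icc (0:ℝ) n ∈ nhdsWithin t (Ici (0:ℝ)) := by
      rw [← Ici_inter_Iic]
      exact Filter.inter_mem self_mem_nhdsWithin
        (mem_nhdsWithin_of_mem_nhds (Iic_mem_nhds htn))
    have h1 : HasDerivWithinAt (sol x n) (G (sol x n t)) (Ici 0) t :=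
      (hsold x n t ⟨ht, le_of_lt htn⟩).mono_of_mem_nhdsWithin hIccmem
    have hev : (fun τ : ℝ => Φ τ x) =ᶠ[nhdsWithin t (Ici (0:ℝ))] sol x n := by
      have hIio : Ici (0:ℝ) ∩ Iio (n:ℝ) ∈ nhdsWithin t (Ici (0:ℝ)) :=
        Filter.inter_mem self_mem_nhdsWithin
          (mem_nhdsWithin_of_mem_nhds (Iio_mem_nhds htn))
      exact Filter.eventuallyEq_of_mem hIio
        (fun τ hτ => hΦeq x n τ hτ.1 (le_of_lt hτ.2))
    have hΦt : Φ t x = sol x n t := hΦeq x n t ht (le_of_lt htn)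
    rw [hΦt]
    exact (h1.congr_of_eventuallyEq hev hΦt)
  have hspace : ∀ (x y : E) (t : ℝ), 0 ≤ t →
      dist (Φ t x) (Φ t y) ≤ dist x y * Real.exp (KG * t) := by
    intro x y t ht
    set n : ℕ := ⌈t⌉₊ + 1 with hn
    have htn : t ≤ (n:ℝ) := le_of_lt (hceil t ht)
    have h := dist_le_of_trajectories_ODE (v := fun _ : ℝ => G)
      (fun _ => hG) (cont x n) (fun τ hτ => key x n τ hτ)
      (cont y n) (fun τ hτ => key y n τ hτ)
      (le_of_eq (by rw [hsol0, hsol0])) t ⟨ht, htn⟩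
    rw [hΦeq x n t ht htn, hΦeq y n t ht htn]
    simpa using h
  have htime : ∀ (x : E) (s t : ℝ), 0 ≤ s → s ≤ t →
      dist (Φ t x) (Φ s x) ≤ MG * (t - s) := by
    intro x s t hs hst
    have ht : 0 ≤ t := le_trans hs hst
    set n : ℕ := ⌈t⌉₊ + 1 with hn
    have htn : t ≤ (n:ℝ) := le_of_lt (hceil t ht)
    have hmv := Convex.norm_image_sub_le_of_norm_hasDerivWithin_le
      (f := sol x n) (f' := fun τ => G (sol x n τ)) (C := MG) (s := Icc (0:ℝ) n)
      (fun τ hτ => hsold x n τ hτ) (fun τ _ => hMG _) (convex_Icc _ _)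
      ⟨hs, le_trans hst htn⟩ ⟨ht, htn⟩
    rw [hΦeq x n t ht htn, hΦeq x n s hs (le_trans hst htn), dist_eq_norm]
    calc ‖sol x n t - sol x n s‖ ≤ MG * ‖t - s‖ := hmv
    _ = MG * (t - s) := by rw [Real.norm_eq_abs, abs_of_nonneg (by linarith)]
  exact ⟨Φ, hΦ0, hΦd, hspace, htime⟩

end RescaledAux


/-- `IsRescaledSemiflow st α F Φ` says that `Φ` restricts to a continuous
semiflow `[0,∞) × st → st` whose trajectories are differentiable with
derivative given by the rescaled vector field `α • F`. -/
def IsRescaledSemiflow {N : ℕ} (st : Set (EuclideanSpace ℝ (Fin N)))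
    (α : EuclideanSpace ℝ (Fin N) → ℝ)
    (F : EuclideanSpace ℝ (Fin N) → EuclideanSpace ℝ (Fin N))
    (Φ : ℝ → EuclideanSpace ℝ (Fin N) → EuclideanSpace ℝ (Fin N)) : Prop :=
  ContinuousOn (fun p : ℝ × EuclideanSpace ℝ (Fin N) => Φ p.1 p.2)
      (Set.Ici (0 : ℝ) ×ˢ st) ∧
  (∀ t : ℝ, 0 ≤ t → ∀ x ∈ st, Φ t x ∈ st) ∧
  (∀ x ∈ st, Φ 0 x = x) ∧
  (∀ t s : ℝ, 0 ≤ t → 0 ≤ s → ∀ x ∈ st, Φ (t + s) x = Φ t (Φ s x)) ∧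
  (∀ x ∈ st, ∀ t : ℝ, 0 ≤ t →
    HasDerivWithinAt (fun τ : ℝ => Φ τ x) (α (Φ t x) • F (Φ t x))
      (Set.Ici (0 : ℝ)) t)

set_option maxHeartbeats 2000000 in
/-- **Existence and uniqueness of the rescaled semiflow `Φ_α` on the state
space `st`.**  Given a compact state space `st ⊆ ℝ^N`, a closed guard set
`gd ⊆ st` with flow set `fs = st \ gd`, a globally Lipschitz vector field `F`
admitting a continuous local semiflow `φ` on `fs` (with derivative `F`), and a
nonnegative Lipschitz function `α` on `st` vanishing precisely on `gd`, there
is a unique continuous semiflow `Φ_α : [0,∞) × st → st` with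
`∂Φ_α/∂t = α(Φ_α)·F(Φ_α)`; in particular `st` is positively invariant under
the flow of `α·F`. -/
theorem exists_unique_rescaled_semiflow {N : ℕ}
    (st gd fs : Set (EuclideanSpace ℝ (Fin N)))
    (hst : IsCompact st) (hgd : IsClosed gd) (hgdsub : gd ⊆ st)
    (hfs : fs = st \ gd)
    (F : EuclideanSpace ℝ (Fin N) → EuclideanSpace ℝ (Fin N))
    (L : ℝ) (hL : 0 ≤ L) (hF : ∀ x y, ‖F x - F y‖ ≤ L * ‖x - y‖)
    -- a continuous local semiflow `φ` on `fs` with domain `D`,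
    -- whose trajectories are integral curves of `F`
    (φ : ℝ × EuclideanSpace ℝ (Fin N) → EuclideanSpace ℝ (Fin N))
    (D : Set (ℝ × EuclideanSpace ℝ (Fin N)))
    (hD_sub : D ⊆ Set.Ici (0 : ℝ) ×ˢ fs)
    (hD_zero : ∀ x ∈ fs, ((0 : ℝ), x) ∈ D)
    (hD_open : ∃ U : Set (ℝ × EuclideanSpace ℝ (Fin N)),
      IsOpen U ∧ D = U ∩ (Set.Ici (0 : ℝ) ×ˢ fs))
    (hφ_cont : ContinuousOn φ D)
    (hφ_maps : ∀ p ∈ D, φ p ∈ fs)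
    (hφ_zero : ∀ x ∈ fs, φ (0, x) = x)
    (hφ_dom : ∀ t s : ℝ, 0 ≤ t → 0 ≤ s → ∀ x ∈ fs,
      ((t + s, x) ∈ D ↔ ((s, x) ∈ D ∧ (t, φ (s, x)) ∈ D)))
    (hφ_semigroup : ∀ t s : ℝ, 0 ≤ t → 0 ≤ s →
      ∀ x, (t + s, x) ∈ D → φ (t + s, x) = φ (t, φ (s, x)))
    (hφ_deriv : ∀ x ∈ fs, ∀ t : ℝ, (t, x) ∈ D →
      HasDerivWithinAt (fun τ : ℝ => φ (τ, x)) (F (φ (t, x)))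
        (Set.Ici (0 : ℝ)) t)
    -- the rescaling function `α`
    (α : EuclideanSpace ℝ (Fin N) → ℝ) (K : NNReal)
    (hα_lip : LipschitzOnWith K α st)
    (hα_nonneg : ∀ x ∈ st, 0 ≤ α x)
    (hα_zero : ∀ x ∈ st, (α x = 0 ↔ x ∈ gd)) :
    ∃ Φ : ℝ → EuclideanSpace ℝ (Fin N) → EuclideanSpace ℝ (Fin N),
      IsRescaledSemiflow st α F Φ ∧
      ∀ Ψ : ℝ → EuclideanSpace ℝ (Fin N) → EuclideanSpace ℝ (Fin N),
        IsRescaledSemiflow st α F Ψ →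
        ∀ t : ℝ, 0 ≤ t → ∀ x ∈ st, Ψ t x = Φ t x := by
  classical
  have hfs_sub : fs ⊆ st := by rw [hfs]; exact diff_subset
  have hLnn : ((L.toNNReal : ℝ≥0) : ℝ) = L := Real.coe_toNNReal L hL
  have hFlip : LipschitzWith L.toNNReal F := LipschitzWith.of_dist_le_mul (by
    intro x y
    rw [dist_eq_norm, dist_eq_norm, hLnn]
    exact hF x y)
  -- bound for `F` on `st`
  obtain ⟨MF0, hMF0⟩ := hst.exists_bound_of_continuousOn hFlip.continuous.continuousOn
  set MF : ℝ := max MF0 0 with hMFdef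
  have hMF : ∀ z ∈ st, ‖F z‖ ≤ MF := fun z hz => le_trans (hMF0 z hz) (le_max_left _ _)
  have hMF_nonneg : 0 ≤ MF := le_max_right _ _
  -- bound for `α` on `st`
  obtain ⟨Mα0, hMα0⟩ := hst.exists_bound_of_continuousOn hα_lip.continuousOn
  set Mα : ℝ := max Mα0 0 with hMαdef
  have hMα : ∀ z ∈ st, |α z| ≤ Mα := fun z hz => le_trans (hMα0 z hz) (le_max_left _ _)
  have hMα_nonneg : 0 ≤ Mα := le_max_right _ _
  -- a globally Lipschitz bounded vector field extending `α • F`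
  obtain ⟨G, KG, MG, hGlip, hGbound, hGeq, hMG0⟩ :
      ∃ (G : EuclideanSpace ℝ (Fin N) → EuclideanSpace ℝ (Fin N)) (KG : ℝ≥0) (MG : ℝ),
        LipschitzWith KG G ∧ (∀ x, ‖G x‖ ≤ MG) ∧
        (∀ x ∈ st, G x = α x • F x) ∧ 0 ≤ MG := by
    have coordLe : ∀ (v : EuclideanSpace ℝ (Fin N)) (i : Fin N), |v i| ≤ ‖v‖ := by
      intro v i
      rw [EuclideanSpace.norm_eq]
      have h1 : |v i| = Real.sqrt (‖v i‖ ^ 2) := by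
        rw [Real.sqrt_sq_eq_abs, Real.norm_eq_abs, abs_abs]
      rw [h1]
      exact Real.sqrt_le_sqrt (Finset.single_le_sum
        (f := fun j => ‖v j‖ ^ 2) (fun j _ => by positivity) (Finset.mem_univ i))
    set Kg : ℝ := (K : ℝ) * MF + Mα * L with hKgdef
    have hKg0 : 0 ≤ Kg :=
      add_nonneg (mul_nonneg K.coe_nonneg hMF_nonneg) (mul_nonneg hMα_nonneg hL)
    have gLip : ∀ x ∈ st, ∀ y ∈ st, ‖α x • F x - α y • F y‖ ≤ Kg * ‖x - y‖ := by
      intro x hx y hy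
      have h1 : α x • F x - α y • F y = (α x - α y) • F x + α y • (F x - F y) := by
        rw [sub_smul, smul_sub]; abel
      have hαd : |α x - α y| ≤ (K:ℝ) * ‖x - y‖ := by
        have := hα_lip.dist_le_mul x hx y hy
        rwa [Real.dist_eq, dist_eq_norm] at this
      calc ‖α x • F x - α y • F y‖ = ‖(α x - α y) • F x + α y • (F x - F y)‖ := by rw [h1]
        _ ≤ ‖(α x - α y) • F x‖ + ‖α y • (F x - F y)‖ := norm_add_le _ _
        _ = |α x - α y| * ‖F x‖ + |α y| * ‖F x - F y‖ := by
            rw [norm_smul, norm_smul, Real.norm_eq_abs, Real.norm_eq_abs]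
        _ ≤ ((K:ℝ) * ‖x - y‖) * MF + Mα * (L * ‖x - y‖) := by
            have h2 := hMF x hx
            have h3 := hMα y hy
            have h4 := hF x y
            have h5 : (0:ℝ) ≤ ‖F x - F y‖ := norm_nonneg _
            have h6 : (0:ℝ) ≤ |α x - α y| := abs_nonneg _
            have h7 : (0:ℝ) ≤ ‖F x‖ := norm_nonneg _
            have h8 : (0:ℝ) ≤ |α y| := abs_nonneg _
            nlinarith [norm_nonneg (x - y), NNReal.coe_nonneg K]
        _ = Kg * ‖x - y‖ := by rw [hKgdef]; ring
    have hcoordLip : ∀ i : Fin N, LipschitzOnWith Kg.toNNReal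
        (fun z => (α z • F z) i) st := by
      intro i
      rw [lipschitzOnWith_iff_dist_le_mul]
      intro x hx y hy
      rw [Real.dist_eq, Real.coe_toNNReal _ hKg0, dist_eq_norm]
      calc |(α x • F x) i - (α y • F y) i|
          = |((α x • F x) - (α y • F y)) i| := by simp [PiLp.sub_apply]
        _ ≤ ‖α x • F x - α y • F y‖ := coordLe _ i
        _ ≤ Kg * ‖x - y‖ := gLip x hx y hy
    have hexti := fun i : Fin N => (hcoordLip i).extend_real
    choose ext hextLip hextEq using hexti
    set M : ℝ := Mα * MF with hMdef
    have hM0 : 0 ≤ M := mul_nonneg hMα_nonneg hMF_nonneg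
    set clamp : ℝ → ℝ := fun r => max (min M r) (-M) with hclampdef
    have hclamp_eq : ∀ r : ℝ, |r| ≤ M → clamp r = r := by
      intro r hr
      rw [hclampdef]
      simp only
      rw [min_eq_right (abs_le.1 hr).2, max_eq_left (abs_le.1 hr).1]
    have hclamp_abs : ∀ r : ℝ, |clamp r| ≤ M := by
      intro r
      rw [abs_le]
      exact ⟨le_max_right _ _, max_le (min_le_left _ _) (by linarith)⟩
    have hclamp_lip : ∀ a b : ℝ, |clamp a - clamp b| ≤ |a - b| := by
      intro a b
      refine le_trans (abs_max_sub_max_le_abs _ _ _) ?_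
      refine le_trans (abs_min_sub_min_le_max _ _ _ _) ?_
      simp
    set G : EuclideanSpace ℝ (Fin N) → EuclideanSpace ℝ (Fin N) :=
      fun x => (WithLp.equiv 2 (Fin N → ℝ)).symm (fun i => clamp (ext i x)) with hGdef
    have hGapp : ∀ (x : EuclideanSpace ℝ (Fin N)) (i : Fin N),
        G x i = clamp (ext i x) := fun x i => rfl
    have hcoordM : ∀ x ∈ st, ∀ i : Fin N, |(α x • F x) i| ≤ M := by
      intro x hx i
      refine le_trans (coordLe _ i) ?_
      rw [norm_smul, Real.norm_eq_abs]
      have h2 := hMα x hx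
      have h3 := hMF x hx
      nlinarith [abs_nonneg (α x), norm_nonneg (F x)]
    have hGeq : ∀ x ∈ st, G x = α x • F x := by
      intro x hx
      apply PiLp.ext
      intro i
      rw [hGapp, ← hextEq i hx]
      exact hclamp_eq _ (hcoordM x hx i)
    have hGbound : ∀ x, ‖G x‖ ≤ Real.sqrt N * M := by
      intro x
      rw [EuclideanSpace.norm_eq]
      have h1 : ∀ i : Fin N, ‖G x i‖ ^ 2 ≤ M ^ 2 := by
        intro i
        rw [Real.norm_eq_abs]
        have h2 := hclamp_abs (ext i x)
        rw [hGapp]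
        nlinarith [abs_nonneg (clamp (ext i x))]
      calc Real.sqrt (∑ i, ‖G x i‖ ^ 2)
          ≤ Real.sqrt (∑ _i : Fin N, M ^ 2) :=
            Real.sqrt_le_sqrt (Finset.sum_le_sum fun i _ => h1 i)
        _ = Real.sqrt ((N : ℝ) * M ^ 2) := by
            rw [Finset.sum_const, Finset.card_univ, Fintype.card_fin, nsmul_eq_mul]
        _ = Real.sqrt N * M := by
            rw [Real.sqrt_mul (Nat.cast_nonneg N), Real.sqrt_sq hM0]
    have hsqKg : (0:ℝ) ≤ Real.sqrt N * Kg := mul_nonneg (Real.sqrt_nonneg _) hKg0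
    have hGlip : LipschitzWith (Real.sqrt N * Kg).toNNReal G := by
      apply LipschitzWith.of_dist_le_mul
      intro x y
      rw [Real.coe_toNNReal _ hsqKg, EuclideanSpace.dist_eq]
      have h1 : ∀ i : Fin N, dist (G x i) (G y i) ^ 2 ≤ (Kg * dist x y) ^ 2 := by
        intro i
        have h2 : dist (G x i) (G y i) ≤ Kg * dist x y := by
          rw [Real.dist_eq, hGapp, hGapp]
          refine le_trans (hclamp_lip _ _) ?_
          have h3 := (hextLip i).dist_le_mul x y
          rwa [Real.dist_eq, Real.coe_toNNReal _ hKg0] at h3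
        nlinarith [dist_nonneg (x := G x i) (y := G y i)]
      calc Real.sqrt (∑ i, dist (G x i) (G y i) ^ 2)
          ≤ Real.sqrt (∑ _i : Fin N, (Kg * dist x y) ^ 2) :=
            Real.sqrt_le_sqrt (Finset.sum_le_sum fun i _ => h1 i)
        _ = Real.sqrt ((N : ℝ) * (Kg * dist x y) ^ 2) := by
            rw [Finset.sum_const, Finset.card_univ, Fintype.card_fin, nsmul_eq_mul]
        _ = Real.sqrt N * (Kg * dist x y) := by
            rw [Real.sqrt_mul (Nat.cast_nonneg N),
              Real.sqrt_sq (mul_nonneg hKg0 dist_nonneg)]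
        _ = Real.sqrt N * Kg * dist x y := by ring
    exact ⟨G, (Real.sqrt N * Kg).toNNReal, Real.sqrt N * M, hGlip, hGbound, hGeq,
      mul_nonneg (Real.sqrt_nonneg _) hM0⟩
  -- the global flow of `G`
  obtain ⟨Φ, hΦ0, hΦd, hspace, htime⟩ := RescaledAux.exists_global_flow hGlip hGbound
  have uniq : ∀ {f g : ℝ → EuclideanSpace ℝ (Fin N)},
      (∀ t : ℝ, 0 ≤ t → HasDerivWithinAt f (G (f t)) (Ici 0) t) →
      (∀ t : ℝ, 0 ≤ t → HasDerivWithinAt g (G (g t)) (Ici 0) t) →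
      f 0 = g 0 → ∀ t : ℝ, 0 ≤ t → f t = g t :=
    fun hf hg h0 => RescaledAux.flow_unique hGlip hf hg h0
  -- points of the guard set are equilibria
  have stay_gd : ∀ y ∈ gd, ∀ t : ℝ, 0 ≤ t → Φ t y = y := by
    intro y hy t ht
    have hyst : y ∈ st := hgdsub hy
    have hGy : G y = 0 := by
      rw [hGeq y hyst, (hα_zero y hyst).2 hy, zero_smul]
    have hconst : ∀ s : ℝ, 0 ≤ s →
        HasDerivWithinAt (fun _ : ℝ => y) (G y) (Ici (0:ℝ)) s := by
      intro s _; rw [hGy]; exact hasDerivWithinAt_const _ _ _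
    have := uniq (hΦd y) (fun s hs => hconst s hs) (by rw [hΦ0]) t ht
    exact this
  -- semigroup property
  have semigroup : ∀ (x : EuclideanSpace ℝ (Fin N)) (T s : ℝ), 0 ≤ T → 0 ≤ s →
      Φ (T + s) x = Φ s (Φ T x) := by
    intro x T s hT hs
    have hf : ∀ τ : ℝ, 0 ≤ τ →
        HasDerivWithinAt (fun τ : ℝ => Φ (T + τ) x) (G (Φ (T + τ) x)) (Ici 0) τ := by
      intro τ hτ
      have houter := hΦd x (T + τ) (by linarith)
      have hinner : HasDerivWithinAt (fun σ : ℝ => T + σ) 1 (Ici (0:ℝ)) τ :=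
        ((hasDerivAt_id τ).const_add T).hasDerivWithinAt
      have hmaps : MapsTo (fun σ : ℝ => T + σ) (Ici (0:ℝ)) (Ici (0:ℝ)) :=
        fun σ hσ => by simp only [mem_Ici] at hσ ⊢; linarith
      have := houter.scomp τ hinner hmaps
      rw [one_smul] at this
      exact this
    exact uniq hf (hΦd (Φ T x)) (by simp [hΦ0]) s hs
  -- local positive invariance starting in the flow set
  have fs_local : ∀ y ∈ fs, ∃ δ : ℝ, 0 < δ ∧ ∀ s ∈ Icc (0:ℝ) δ, Φ s y ∈ st := by
    intro y hy
    have hyst : y ∈ st := hfs_sub hy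
    obtain ⟨U, hUopen, hUD⟩ := hD_open
    have h0D : ((0:ℝ), y) ∈ D := hD_zero y hy
    have h0U : ((0:ℝ), y) ∈ U := by rw [hUD] at h0D; exact h0D.1
    obtain ⟨r, hr, hball⟩ := Metric.isOpen_iff.1 hUopen _ h0U
    set ε : ℝ := r / 2 with hεdef
    have hε : 0 < ε := by positivity
    have hεD : ∀ s ∈ Icc (0:ℝ) ε, ((s, y) : ℝ × EuclideanSpace ℝ (Fin N)) ∈ D := by
      intro s hs
      have hsU : ((s, y) : ℝ × EuclideanSpace ℝ (Fin N)) ∈ U := by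
        apply hball
        rw [Metric.mem_ball, Prod.dist_eq]
        apply max_lt
        · rw [Real.dist_eq, sub_zero, abs_of_nonneg hs.1]
          have := hs.2
          rw [hεdef] at this
          linarith
        · rw [dist_self]; exact hr
      rw [hUD]
      exact ⟨hsU, mem_prod.2 ⟨mem_Ici.2 hs.1, hy⟩⟩
    -- clamp time into `[0, ε]`
    set ct : ℝ → ℝ := fun τ => max (min τ ε) 0 with hctdef
    have hct_mem : ∀ τ, ct τ ∈ Icc (0:ℝ) ε := fun τ =>
      ⟨le_max_right _ _, max_le (min_le_right _ _) (le_of_lt hε)⟩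
    have hct_eq : ∀ τ ∈ Icc (0:ℝ) ε, ct τ = τ := by
      intro τ hτ
      rw [hctdef]
      simp only
      rw [min_eq_left hτ.2, max_eq_left hτ.1]
    have hct_lip : ∀ a b : ℝ, |ct a - ct b| ≤ |a - b| := by
      intro a b
      refine le_trans (abs_max_sub_max_le_abs _ _ _) ?_
      refine le_trans (abs_min_sub_min_le_max _ _ _ _) ?_
      simp
    -- the trajectory `ψ = φ (·, y)` on `[0, ε]`
    set ψ : ℝ → EuclideanSpace ℝ (Fin N) := fun τ => φ (τ, y) with hψdef
    have hψd : ∀ τ ∈ Icc (0:ℝ) ε, HasDerivWithinAt ψ (F (ψ τ)) (Icc (0:ℝ) ε) τ :=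
      fun τ hτ => (hφ_deriv y hy τ (hεD τ hτ)).mono Icc_subset_Ici_self
    have hψst : ∀ τ ∈ Icc (0:ℝ) ε, ψ τ ∈ st := fun τ hτ =>
      hfs_sub (hφ_maps _ (hεD τ hτ))
    have hψlip : ∀ a ∈ Icc (0:ℝ) ε, ∀ b ∈ Icc (0:ℝ) ε,
        ‖ψ b - ψ a‖ ≤ MF * ‖b - a‖ :=
      fun a ha b hb => Convex.norm_image_sub_le_of_norm_hasDerivWithin_le
        hψd (fun τ hτ => hMF _ (hψst τ hτ)) (convex_Icc _ _) ha hb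
    -- rescaled speed along the trajectory
    set h : ℝ → ℝ := fun ρ => α (ψ (ct ρ)) with hhdef
    have hh_bound : ∀ ρ, |h ρ| ≤ Mα := fun ρ => hMα _ (hψst _ (hct_mem ρ))
    have hh_nonneg : ∀ ρ, 0 ≤ h ρ := fun ρ => hα_nonneg _ (hψst _ (hct_mem ρ))
    have hh_lip : LipschitzWith ((K : ℝ) * MF).toNNReal h := by
      apply LipschitzWith.of_dist_le_mul
      intro a b
      rw [Real.coe_toNNReal _ (mul_nonneg K.coe_nonneg hMF_nonneg)]
      have h1 := hα_lip.dist_le_mul _ (hψst _ (hct_mem a)) _ (hψst _ (hct_mem b))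
      refine le_trans h1 ?_
      have h2 := hψlip _ (hct_mem b) _ (hct_mem a)
      have h3 : ‖ct a - ct b‖ ≤ dist a b := by
        rw [Real.norm_eq_abs, Real.dist_eq]; exact hct_lip a b
      have h4 : (0:ℝ) ≤ (K:ℝ) := K.coe_nonneg
      have h6 : dist (ψ (ct a)) (ψ (ct b)) ≤ MF * dist a b := by
        rw [dist_eq_norm]
        refine le_trans h2 ?_
        nlinarith [norm_nonneg (ct a - ct b)]
      nlinarith [dist_nonneg (x := a) (y := b),
        dist_nonneg (x := ψ (ct a)) (y := ψ (ct b))]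
    -- solve the time-change ODE `σ' = h ∘ σ`
    set δ : ℝ := ε / (Mα + 1) with hδdef
    have hδpos : 0 < δ := by positivity
    have hMαδ : Mα * δ ≤ ε := by
      rw [hδdef, ← mul_div_assoc, div_le_iff₀ (by linarith : (0:ℝ) < Mα + 1)]
      nlinarith
    have hpl : IsPicardLindelof (fun _ : ℝ => h) (tmin := 0) (tmax := δ)
        ⟨0, le_rfl, le_of_lt hδpos⟩ (0:ℝ) ε.toNNReal 0 Mα.toNNReal ((K : ℝ) * MF).toNNReal := by
      apply IsPicardLindelof.of_time_independent
      · intro ρ _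
        rw [Real.norm_eq_abs, Real.coe_toNNReal _ hMα_nonneg]
        exact hh_bound ρ
      · exact hh_lip.lipschitzOnWith
      · simp only [sub_zero, NNReal.coe_zero, Real.coe_toNNReal _ hMα_nonneg,
          Real.coe_toNNReal _ (le_of_lt hε)]
        rw [max_eq_left (le_of_lt hδpos)]
        exact hMαδ
    obtain ⟨σ, hσ0, hσd⟩ := hpl.exists_eq_forall_mem_Icc_hasDerivWithinAt₀
    have hσcont : ContinuousOn σ (Icc (0:ℝ) δ) :=
      fun τ hτ => (hσd τ hτ).continuousWithinAt
    have hσmono : MonotoneOn σ (Icc (0:ℝ) δ) := by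
      apply monotoneOn_of_hasDerivWithinAt_nonneg (f' := fun τ => h (σ τ))
        (convex_Icc _ _) hσcont
      · exact fun τ hτ => ((hσd τ (interior_subset hτ)).mono interior_subset)
      · exact fun τ _ => hh_nonneg _
    have hσ_nonneg : ∀ u ∈ Icc (0:ℝ) δ, 0 ≤ σ u := by
      intro u hu
      have := hσmono (left_mem_Icc.2 (le_of_lt hδpos)) hu hu.1
      rwa [hσ0] at this
    have hσ_mem : ∀ u ∈ Icc (0:ℝ) δ, σ u ∈ Icc (0:ℝ) ε := by
      intro u hu
      refine ⟨hσ_nonneg u hu, ?_⟩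
      have hmv := Convex.norm_image_sub_le_of_norm_hasDerivWithin_le
        (f := σ) (f' := fun τ => h (σ τ)) (C := Mα) (s := Icc (0:ℝ) δ)
        hσd (fun τ _ => by rw [Real.norm_eq_abs]; exact hh_bound _) (convex_Icc _ _)
        (left_mem_Icc.2 (le_of_lt hδpos)) hu
      rw [hσ0, sub_zero, sub_zero, Real.norm_eq_abs, Real.norm_eq_abs] at hmv
      have h1 : σ u ≤ Mα * |u| := le_trans (le_abs_self _) hmv
      have h2 : |u| ≤ δ := by rw [abs_of_nonneg hu.1]; exact hu.2
      have h3 : Mα * |u| ≤ Mα * δ := by nlinarith [abs_nonneg u]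
      linarith
    -- the reparametrised curve `c`
    set c : ℝ → EuclideanSpace ℝ (Fin N) := fun u => ψ (ct (σ u)) with hcdef
    have hc_st : ∀ u, c u ∈ st := fun u => hψst _ (hct_mem _)
    have hc_eq : ∀ u ∈ Icc (0:ℝ) δ, c u = ψ (σ u) := by
      intro u hu
      rw [hcdef]
      simp only
      rw [hct_eq _ (hσ_mem u hu)]
    have hc_deriv : ∀ u ∈ Icc (0:ℝ) δ,
        HasDerivWithinAt c (G (c u)) (Icc (0:ℝ) δ) u := by
      intro u hu
      have houter : HasDerivWithinAt ψ (F (ψ (σ u))) (Ici (0:ℝ)) (σ u) :=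
        hφ_deriv y hy (σ u) (hεD _ (hσ_mem u hu))
      have hmaps : MapsTo σ (Icc (0:ℝ) δ) (Ici (0:ℝ)) := fun τ hτ => hσ_nonneg τ hτ
      have hcomp := houter.scomp u (hσd u hu) hmaps
      have hcongr : HasDerivWithinAt c (h (σ u) • F (ψ (σ u))) (Icc (0:ℝ) δ) u :=
        hcomp.congr (fun τ hτ => hc_eq τ hτ) (hc_eq u hu)
      have hval : h (σ u) • F (ψ (σ u)) = G (c u) := by
        rw [hGeq _ (hc_st u), hc_eq u hu]
        have hh1 : h (σ u) = α (ψ (σ u)) := by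
          rw [hhdef]
          simp only
          rw [hct_eq _ (hσ_mem u hu)]
        rw [hh1]
      rwa [hval] at hcongr
    -- conclude by uniqueness on `[0, δ]`
    refine ⟨δ, hδpos, ?_⟩
    have h0eq : Φ 0 y = c 0 := by
      rw [hΦ0, hcdef]
      simp only
      rw [hσ0, hct_eq 0 ⟨le_rfl, le_of_lt hε⟩]
      exact (hφ_zero y hy).symm
    have heq := RescaledAux.unique_on_Icc (b := δ) hGlip
      (RescaledAux.cont_of_ici_deriv (hΦd y) δ)
      (RescaledAux.ico_deriv_of_ici_deriv (hΦd y) δ)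
      (fun τ hτ => (hc_deriv τ hτ).continuousWithinAt)
      (fun τ hτ => RescaledAux.icc_to_ici (hc_deriv τ ⟨hτ.1, le_of_lt hτ.2⟩) hτ hτ.1)
      h0eq
    intro u hu
    rw [show Φ u y = c u from heq hu]
    exact hc_st u
  -- global positive invariance of `st`
  have invariance : ∀ x ∈ st, ∀ t : ℝ, 0 ≤ t → Φ t x ∈ st := by
    intro x hx
    by_contra hcon
    push_neg at hcon
    obtain ⟨t₁, ht₁, hnot₁⟩ := hcon
    set S : Set ℝ := {u : ℝ | 0 ≤ u ∧ Φ u x ∉ st} with hSdef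
    have hSne : S.Nonempty := ⟨t₁, ht₁, hnot₁⟩
    have hSbdd : BddBelow S := ⟨0, fun u hu => hu.1⟩
    set T : ℝ := sInf S with hTdef
    have hT0 : 0 ≤ T := le_csInf hSne (fun u hu => hu.1)
    have hTlow : ∀ u ∈ S, T ≤ u := fun u hu => csInf_le hSbdd hu
    have hpre : ∀ s : ℝ, 0 ≤ s → s < T → Φ s x ∈ st := by
      intro s hs hsT
      by_contra hc
      exact absurd (hTlow s ⟨hs, hc⟩) (not_le.2 hsT)
    have hTst : Φ T x ∈ st := by
      rcases eq_or_lt_of_le hT0 with hT | hT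
      · rw [← hT, hΦ0]; exact hx
      · have hcw : ContinuousWithinAt (fun s : ℝ => Φ s x) (Ico 0 T) T :=
          ((hΦd x T hT0).continuousWithinAt).mono Ico_subset_Ici_self
        have hmem : T ∈ closure (Ico (0:ℝ) T) := by
          rw [closure_Ico (ne_of_lt hT)]; exact ⟨hT0, le_rfl⟩
        have hcl := hcw.mem_closure_image hmem
        have himg : (fun s : ℝ => Φ s x) '' Ico 0 T ⊆ st := by
          rintro _ ⟨s, hs, rfl⟩; exact hpre s hs.1 hs.2
        exact hst.isClosed.closure_subset_iff.2 himg hcl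
    by_cases hy : Φ T x ∈ gd
    · have hTt₁ : T ≤ t₁ := hTlow t₁ ⟨ht₁, hnot₁⟩
      have : Φ t₁ x = Φ T x := by
        have h1 : Φ t₁ x = Φ (t₁ - T) (Φ T x) := by
          rw [← semigroup x T (t₁ - T) hT0 (by linarith)]
          ring_nf
        rw [h1, stay_gd _ hy (t₁ - T) (by linarith)]
      exact hnot₁ (this ▸ hTst)
    · have hyfs : Φ T x ∈ fs := by rw [hfs]; exact ⟨hTst, hy⟩
      obtain ⟨δ, hδ, hδst⟩ := fs_local _ hyfs
      have hlow : ∀ u ∈ S, T + δ ≤ u := by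
        intro u hu
        by_contra hc
        push_neg at hc
        have hTu : T ≤ u := hTlow u hu
        have hust : Φ u x ∈ st := by
          have h1 : Φ u x = Φ (u - T) (Φ T x) := by
            rw [← semigroup x T (u - T) hT0 (by linarith)]
            ring_nf
          rw [h1]
          exact hδst (u - T) ⟨by linarith, by linarith⟩
        exact hu.2 hust
      have := le_csInf hSne hlow
      linarith
  -- joint continuity
  have cont : ContinuousOn (fun p : ℝ × EuclideanSpace ℝ (Fin N) => Φ p.1 p.2)
      (Set.Ici (0 : ℝ) ×ˢ st) := by
    have hKG0 : (0:ℝ) ≤ (KG:ℝ) := KG.coe_nonneg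
    rw [Metric.continuousOn_iff]
    rintro ⟨t₀, x₀⟩ hp ε hε
    obtain ⟨ht₀, hx₀⟩ := hp
    simp only [mem_Ici] at ht₀
    set C : ℝ := Real.exp (KG * (t₀ + 1)) + MG with hCdef
    have hC0 : 0 < C := by positivity
    refine ⟨min 1 (ε / (C + 1)), by positivity, ?_⟩
    rintro ⟨t, x⟩ hq hdist
    obtain ⟨ht, hx⟩ := hq
    simp only [mem_Ici] at ht
    set δ : ℝ := min 1 (ε / (C + 1)) with hδdef
    have hδ1 : δ ≤ 1 := min_le_left _ _
    have hδε : δ ≤ ε / (C + 1) := min_le_right _ _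
    rw [Prod.dist_eq, max_lt_iff] at hdist
    have hd1 : dist t t₀ < δ := hdist.1
    have hd2 : dist x x₀ < δ := hdist.2
    have habs : |t - t₀| < δ := by rwa [Real.dist_eq] at hd1
    have htle : t ≤ t₀ + 1 := by
      have := abs_lt.1 habs
      linarith
    -- spatial estimate
    have hs1 : dist (Φ t x) (Φ t x₀) ≤ dist x x₀ * Real.exp (KG * (t₀ + 1)) := by
      refine le_trans (hspace x x₀ t ht) ?_
      have : Real.exp (KG * t) ≤ Real.exp (KG * (t₀ + 1)) :=
        Real.exp_le_exp.2 (by nlinarith)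
      nlinarith [dist_nonneg (x := x) (y := x₀)]
    -- temporal estimate
    have hs2 : dist (Φ t x₀) (Φ t₀ x₀) ≤ MG * |t - t₀| := by
      rcases le_total t t₀ with h | h
      · rw [dist_comm]
        refine le_trans (htime x₀ t t₀ ht h) ?_
        rw [abs_of_nonpos (by linarith)]
        nlinarith
      · refine le_trans (htime x₀ t₀ t ht₀ h) ?_
        rw [abs_of_nonneg (by linarith)]
    have hexp0 : 0 < Real.exp (KG * (t₀ + 1)) := Real.exp_pos _
    calc dist (Φ t x) (Φ t₀ x₀)
        ≤ dist (Φ t x) (Φ t x₀) + dist (Φ t x₀) (Φ t₀ x₀) := dist_triangle _ _ _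
      _ ≤ dist x x₀ * Real.exp (KG * (t₀ + 1)) + MG * |t - t₀| := add_le_add hs1 hs2
      _ < ε := by
          have h1 : dist x x₀ * Real.exp (KG * (t₀ + 1)) < δ * Real.exp (KG * (t₀ + 1)) := by
            exact mul_lt_mul_of_pos_right hd2 hexp0
          have h2 : MG * |t - t₀| ≤ MG * δ := by
            have := abs_nonneg (t - t₀)
            nlinarith
          have h3 : δ * C ≤ (ε / (C + 1)) * C := by nlinarith
          have h4 : (ε / (C + 1)) * C < ε := by
            rw [div_mul_eq_mul_div, div_lt_iff₀ (by linarith)]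
            nlinarith
          have h5 : δ * Real.exp (KG * (t₀ + 1)) + MG * δ = δ * C := by ring
          linarith
  refine ⟨Φ, ⟨cont, fun t ht x hx => invariance x hx t ht, fun x _ => hΦ0 x,
    ?_, ?_⟩, ?_⟩
  · intro t s ht hs x hx
    rw [add_comm, semigroup x s t hs ht]
  · intro x hx t ht
    have h := hΦd x t ht
    rwa [hGeq _ (invariance x hx t ht)] at h
  · intro Ψ hΨ t ht x hx
    obtain ⟨hΨc, hΨinv, hΨ0, hΨsg, hΨd⟩ := hΨ
    refine uniq (f := fun τ => Ψ τ x) (g := fun τ => Φ τ x) ?_ (hΦd x)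
      (by simp only [hΨ0 x hx, hΦ0 x]) t ht
    intro τ hτ
    have h := hΨd x hx τ hτ
    rwa [← hGeq _ (hΨinv τ hτ x hx)] at h
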